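/- In the setting of the previous statement, the subspace 𝒩₋ = {(Φ,V) ∈ ℝ^N × (V*⊗ℝ^N) : (T^b+αN^b)V_b^A = c^{aA}_B V_a^B + d^A_B Φ^B for all A} has dimension (d+1)N, and the symmetric bilinear form B(N;·,·) on ℝ^N × (V*⊗ℝ^N) has signature (N,(d+1)N); hence 𝒩₋ is a maximal non-positive subspace for B(N;·,·). -/

import Mathlib

theorem aux_eps (α δ κ ε : ℝ) (hα : 0 < α) (hδ : δ = α * (1 + α ^ 2)⁻¹ / 2)
    (hκ : κ = 2 * (2 * δ + (1 - 2 * δ * α) ^ 2 / α) ^ 2)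
    (hε : 0 < ε) (hεδ : κ * ε < δ) : ε < 1 + α ^ 2 := by
  have hA : (0:ℝ) < 1 + α ^ 2 := by positivity
  have hδpos : 0 < δ := by rw [hδ]; positivity
  have hκpos : 0 < κ := by
    rw [hκ]
    have h1 : 0 < 2 * δ + (1 - 2*δ*α)^2/α := by positivity
    positivity
  have key : δ ≤ κ * (1 + α ^ 2) := by
    have h2δα : 1 - 2*δ*α = (1+α^2)⁻¹ := by
      rw [hδ]; field_simp; ring
    have e1 : 2 * (α * (1+α^2)⁻¹ / 2) + ((1+α^2)⁻¹)^2/α = (α^4+α^2+1) / (α*(1+α^2)^2) := by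
      field_simp; ring
    rw [hκ, h2δα, hδ, e1]
    have h3 : α^3 * (1+α^2)^2 ≤ 4 * (α^4+α^2+1)^2 := by
      nlinarith [sq_nonneg (α^2-1), sq_nonneg (α-1), sq_nonneg (α^2-α), sq_nonneg (α^3-1), pow_pos hα 3, sq_nonneg ((α^2+1)^2 - 2*α^3)]
    have e2 : α * (1+α^2)⁻¹ / 2 = α/(2*(1+α^2)) := by
      field_simp
    have e3 : 2 * ((α^4+α^2+1) / (α*(1+α^2)^2))^2 * (1+α^2)
        = 2*(α^4+α^2+1)^2 / (α^2*(1+α^2)^3) := by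
      rw [div_pow]; field_simp
    rw [e2, e3, div_le_div_iff₀ (by positivity) (by positivity)]
    nlinarith [h3, hA, sq_nonneg α, mul_le_mul_of_nonneg_right h3 (le_of_lt hA)]
  nlinarith [mul_pos hκpos hε]
theorem aux_timelike {d : ℕ} {V : Type*} [AddCommGroup V] [Module ℝ V]
    (g : V →ₗ[ℝ] V →ₗ[ℝ] ℝ) (b : Module.Basis (Fin (d + 1)) ℝ V)
    (hsig : ∀ i j, g (b i) (b j) = if i = j then (if i = 0 then (-1:ℝ) else 1) else 0)
    (T : V) (hT : g T T = -1) (w : V) (hTw : g T w = 0) :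
    0 ≤ g w w ∧ (g w w = 0 → w = 0) := by
  have gform : ∀ v z : V, g v z
      = -(b.repr v 0 * b.repr z 0) + ∑ i : Fin d, b.repr v i.succ * b.repr z i.succ := by
    intro v z
    conv_lhs => rw [← b.sum_repr v, ← b.sum_repr z]
    simp only [map_sum, map_smul, LinearMap.sum_apply, LinearMap.smul_apply, smul_eq_mul, hsig]
    have inner : ∀ x : Fin (d+1), ∑ x1 : Fin (d+1),
        b.repr v x1 * (if x1 = x then (if x1 = 0 then (-1:ℝ) else 1) else 0)
        = b.repr v x * (if x = 0 then (-1:ℝ) else 1) := by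
      intro x
      rw [Finset.sum_eq_single x]
      · simp
      · intro i _ hij; simp [hij]
      · simp
    simp only [inner]
    rw [Fin.sum_univ_succ]
    simp only [Fin.succ_ne_zero, if_false, if_true, reduceIte, mul_neg, mul_one]
    congr 1
    · ring
    · exact Finset.sum_congr rfl fun i _ => mul_comm _ _
  have hTT := gform T T
  have hTw' := gform T w
  have hww := gform w w
  rw [hT] at hTT
  rw [hTw] at hTw'
  set t0 := b.repr T 0 with ht0
  set w0 := b.repr w 0 with hw0
  set TS := ∑ i : Fin d, b.repr T i.succ * b.repr T i.succ with hTS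
  set WS := ∑ i : Fin d, b.repr w i.succ * b.repr w i.succ with hWS
  have hCS := Finset.sum_mul_sq_le_sq_mul_sq Finset.univ
    (fun i : Fin d => b.repr T i.succ) (fun i : Fin d => b.repr w i.succ)
  have hTsq : ∑ i : Fin d, b.repr T i.succ ^ 2 = TS := by rw [hTS]; simp [sq]
  have hWsq : ∑ i : Fin d, b.repr w i.succ ^ 2 = WS := by rw [hWS]; simp [sq]
  have hTW : ∑ i : Fin d, b.repr T i.succ * b.repr w i.succ = t0 * w0 := by linarith
  rw [hTsq, hWsq, hTW] at hCS
  have hWnn : 0 ≤ WS := Finset.sum_nonneg fun i _ => mul_self_nonneg _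
  have hTSnn : 0 ≤ TS := Finset.sum_nonneg fun i _ => mul_self_nonneg _
  have hTSval : TS = t0 * t0 - 1 := by linarith
  have hmain : 0 ≤ g w w := by
    rw [hww]
    nlinarith [hCS, hWnn, hTSval, mul_nonneg (mul_self_nonneg t0) hWnn,
      mul_nonneg (mul_self_nonneg t0) (mul_self_nonneg w0), mul_self_nonneg w0]
  refine ⟨hmain, fun hzero => ?_⟩
  rw [hww] at hzero
  have hWzero : WS = 0 := by
    nlinarith [hCS, hWnn, hTSval, mul_self_nonneg w0,
      mul_nonneg (mul_self_nonneg t0) hWnn]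
  have hw0zero : w0 = 0 := by nlinarith [hWzero]
  have hallz : ∀ i : Fin d, b.repr w i.succ = 0 := by
    intro i
    have hz := (Finset.sum_eq_zero_iff_of_nonneg
      (fun i _ => mul_self_nonneg (b.repr w i.succ))).mp (hWS ▸ hWzero) i (Finset.mem_univ i)
    exact mul_self_eq_zero.mp hz
  have hrep : ∀ j, b.repr w j = 0 := fun j => Fin.cases hw0zero hallz j
  exact b.repr.map_eq_zero_iff.mp (Finsupp.ext hrep)
theorem aux_hsum {Nf : ℕ} (h : Matrix (Fin Nf) (Fin Nf) ℝ) (hpos : h.PosDef)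
    {V : Type*} [AddCommGroup V] [Module ℝ V] {ι : Type*} (b : Module.Basis ι ℝ V)
    (F : V →ₗ[ℝ] V →ₗ[ℝ] ℝ) (w : Fin Nf → V)
    (hFsymm : ∀ x y, F x y = F y x) (hnn : ∀ x : Fin Nf → ℝ, 0 ≤ F (∑ A, x A • w A) (∑ A, x A • w A))
    (hdef : ∀ x : Fin Nf → ℝ, F (∑ A, x A • w A) (∑ A, x A • w A) = 0 → (∑ A, x A • w A) = 0) :
    0 ≤ (∑ A, ∑ B, h A B * F (w A) (w B)) ∧
    ((∑ A, ∑ B, h A B * F (w A) (w B)) = 0 → ∀ A, w A = 0) := by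
  obtain ⟨M, hM⟩ : ∃ M : Matrix (Fin Nf) (Fin Nf) ℝ, h = M.conjTranspose * M := by
    open scoped MatrixOrder in
    exact ⟨CFC.sqrt h, by
      rw [← Matrix.star_eq_conjTranspose, (CFC.sqrt_nonneg h).isSelfAdjoint.star_eq, CFC.sqrt_mul_sqrt_self h (Matrix.nonneg_iff_posSemidef.mpr hpos.posSemidef)]⟩
  have hhAB : ∀ A B, h A B = ∑ k, M k A * M k B := by
    intro A B; rw [hM]; simp [Matrix.mul_apply, Matrix.conjTranspose_apply]
  set z : Fin Nf → V := fun k => ∑ A, M k A • w A with hzdef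
  have hz : ∀ k, F (z k) (z k) = ∑ A, ∑ B, (M k A * M k B) * F (w A) (w B) := by
    intro k
    rw [hzdef]
    simp only [map_sum, map_smul, LinearMap.sum_apply, LinearMap.smul_apply, smul_eq_mul]
    refine Finset.sum_congr rfl fun A _ => ?_
    rw [Finset.mul_sum]
    refine Finset.sum_congr rfl fun B _ => ?_
    rw [hFsymm (w B) (w A)]
    ring
  have key : (∑ A, ∑ B, h A B * F (w A) (w B)) = ∑ k, F (z k) (z k) := by
    calc ∑ A, ∑ B, h A B * F (w A) (w B)
        = ∑ A, ∑ B, ∑ k, (M k A * M k B) * F (w A) (w B) := by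
          refine Finset.sum_congr rfl fun A _ => Finset.sum_congr rfl fun B _ => ?_
          rw [hhAB, Finset.sum_mul]
      _ = ∑ k, ∑ A, ∑ B, (M k A * M k B) * F (w A) (w B) := by
          rw [Finset.sum_congr rfl fun A _ => Finset.sum_comm, Finset.sum_comm]
      _ = ∑ k, F (z k) (z k) := by
          exact Finset.sum_congr rfl fun k _ => (hz k).symm
  have hnn' : ∀ k, 0 ≤ F (z k) (z k) := fun k => hnn (fun A => M k A)
  constructor
  · rw [key]; exact Finset.sum_nonneg fun k _ => hnn' k
  · intro hzero A
    rw [key] at hzero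
    have hzk : ∀ k, z k = 0 := by
      intro k
      exact hdef _ ((Finset.sum_eq_zero_iff_of_nonneg (fun k _ => hnn' k)).mp hzero k (Finset.mem_univ k))
    have hcoord : ∀ i : ι, b.repr (w A) i = 0 := by
      intro i
      set y : Fin Nf → ℝ := fun A => b.repr (w A) i with hydef
      have hMy : M.mulVec y = 0 := by
        funext k
        have : b.repr (z k) i = 0 := by rw [hzk k]; simp
        rw [hzdef] at this
        simp only [map_sum, map_smul, Finsupp.coe_finset_sum, Finset.sum_apply,
          Finsupp.smul_apply, smul_eq_mul] at this
        simpa [Matrix.mulVec, dotProduct, hydef] using this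
      have hy0 : y = 0 := by
        by_contra hy
        have := hpos.dotProduct_mulVec_pos hy
        rw [hM, ← Matrix.mulVec_mulVec, hMy, Matrix.mulVec_zero, dotProduct_zero] at this
        exact lt_irrefl 0 this
      have := congrFun hy0 A
      simpa [hydef] using this
    have : b.repr (w A) = 0 := Finsupp.ext hcoord
    exact b.repr.map_eq_zero_iff.mp this

set_option maxHeartbeats 1000000 in
/-- Maximality of the boundary space `𝒩₋` for systems of wave equations
(Lemma 5 of the paper).  Vector-valued one-forms are represented by their
index-raised versions `v : Fin Nf → V`. -/
theorem stmt8 (d : ℕ) (hd : 1 ≤ d) (Nf : ℕ) (hNf : 0 < Nf)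
    (V : Type*) [AddCommGroup V] [Module ℝ V]
    (g : V →ₗ[ℝ] V →ₗ[ℝ] ℝ) (hg : ∀ v w, g v w = g w v)
    (b : Module.Basis (Fin (d + 1)) ℝ V)
    (hsig : ∀ i j : Fin (d + 1),
      g (b i) (b j) = if i = j then (if i = 0 then (-1 : ℝ) else 1) else 0)
    (T N : V) (hT : g T T = -1) (hN : g N N = 1) (hTN : g T N = 0)
    (h : Matrix (Fin Nf) (Fin Nf) ℝ) (hsymm : h.IsSymm) (hpos : h.PosDef)
    (α : ℝ) (hα : 0 < α)
    (δ κ : ℝ) (hδ : δ = α * (1 + α ^ 2)⁻¹ / 2)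
    (hκ : κ = 2 * (2 * δ + (1 - 2 * δ * α) ^ 2 / α) ^ 2)
    (c : Fin Nf → Fin Nf → V) (dm : Matrix (Fin Nf) (Fin Nf) ℝ)
    (ε Λ : ℝ) (hε : 0 < ε) (hεδ : κ * ε < δ) (hΛ : 0 < Λ)
    (hc : ∀ v : Fin Nf → V,
      ∑ A : Fin Nf, ∑ B : Fin Nf, h A B *
          (∑ C : Fin Nf, g (c A C) (v C)) * (∑ D : Fin Nf, g (c B D) (v D))
        ≤ ε * ∑ A : Fin Nf, ∑ B : Fin Nf, h A B *
          (g (v A) (v B) + 2 * g T (v A) * g T (v B)))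
    (hd2 : ∀ Φ : Fin Nf → ℝ,
      2 * κ * ∑ A : Fin Nf, ∑ B : Fin Nf, h A B *
          (∑ C : Fin Nf, dm A C * Φ C) * (∑ D : Fin Nf, dm B D * Φ D)
        ≤ δ * Λ * ∑ A : Fin Nf, ∑ B : Fin Nf, h A B * Φ A * Φ B)
    (u : V) (hu : u = T + δ • N)
    (Bq : ((Fin Nf → ℝ) × (Fin Nf → V)) → ((Fin Nf → ℝ) × (Fin Nf → V)) → ℝ)
    (hBq : ∀ p q : (Fin Nf → ℝ) × (Fin Nf → V),
      Bq p q = -Λ * g u N * (∑ A : Fin Nf, ∑ B : Fin Nf, h A B * p.1 A * q.1 B)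
        + ∑ A : Fin Nf, ∑ B : Fin Nf, h A B *
            (-(g N u) * g (p.2 A) (q.2 B) + g N (p.2 A) * g u (q.2 B)
              + g u (p.2 A) * g N (q.2 B)))
    (S : Submodule ℝ ((Fin Nf → ℝ) × (Fin Nf → V)))
    (hS : (S : Set ((Fin Nf → ℝ) × (Fin Nf → V)))
      = {p | ∀ A : Fin Nf, g T (p.2 A) + α * g N (p.2 A)
          = (∑ B : Fin Nf, g (c A B) (p.2 B)) + ∑ B : Fin Nf, dm A B * p.1 B}) :
    Module.finrank ℝ S = (d + 1) * Nf ∧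
    (∃ P Q : Submodule ℝ ((Fin Nf → ℝ) × (Fin Nf → V)),
      Module.finrank ℝ P = Nf ∧ Module.finrank ℝ Q = (d + 1) * Nf ∧
      (∀ p ∈ P, p ≠ 0 → 0 < Bq p p) ∧ (∀ p ∈ Q, p ≠ 0 → Bq p p < 0)) ∧
    (∀ S' : Submodule ℝ ((Fin Nf → ℝ) × (Fin Nf → V)),
      S ≤ S' → (∀ p ∈ S', Bq p p ≤ 0) → S' = S) := by
  classical
  haveI : FiniteDimensional ℝ V := Module.Basis.finiteDimensional_of_finite b
  have hNT : g N T = 0 := by rw [hg]; exact hTN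
  have hδpos : 0 < δ := by rw [hδ]; positivity
  have hδlt : δ < 1 := by
    rw [hδ, div_lt_iff₀ (by norm_num), mul_inv_lt_iff₀' (by positivity)]
    nlinarith [sq_nonneg α, sq_nonneg (α-1)]
  have hεα : ε < 1 + α ^ 2 := aux_eps α δ κ ε hα hδ hκ hε hεδ
  -- quadratic form of h
  have hQexp : ∀ s : Fin Nf → ℝ, dotProduct s (h.mulVec s)
      = ∑ A, ∑ B, h A B * s A * s B := by
    intro s
    simp only [dotProduct, Matrix.mulVec]
    refine Finset.sum_congr rfl fun A _ => ?_
    rw [Finset.mul_sum]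
    exact Finset.sum_congr rfl fun B _ => by ring
  have hQpos : ∀ s : Fin Nf → ℝ, s ≠ 0 → 0 < ∑ A, ∑ B, h A B * s A * s B := by
    intro s hs
    have := hpos.dotProduct_mulVec_pos hs
    rwa [star_trivial, hQexp] at this
  have hQnn : ∀ s : Fin Nf → ℝ, 0 ≤ ∑ A, ∑ B, h A B * s A * s B := by
    intro s
    have := hpos.posSemidef.dotProduct_mulVec_nonneg s
    rwa [star_trivial, hQexp] at this
  -- dimensions
  have hdimV : Module.finrank ℝ V = d + 1 := by
    rw [Module.finrank_eq_card_basis b, Fintype.card_fin]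
  have hdimF : Module.finrank ℝ (Fin Nf → ℝ) = Nf := by
    rw [Module.finrank_pi, Fintype.card_fin]
  have hdimW : Module.finrank ℝ (Fin Nf → V) = Nf * (d + 1) := by
    rw [Module.finrank_pi_fintype, Finset.sum_const, Finset.card_univ, Fintype.card_fin,
      hdimV, smul_eq_mul]
  have hdimtot : Module.finrank ℝ ((Fin Nf → ℝ) × (Fin Nf → V)) = Nf + Nf * (d + 1) := by
    rw [Module.finrank_prod, hdimF, hdimW]
  -- g-value table
  have gTu : g u T = -1 ∧ g u N = δ ∧ g N u = δ ∧ g T u = -1 := by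
    refine ⟨?_, ?_, ?_, ?_⟩ <;> rw [hu] <;>
      simp [map_add, map_smul, LinearMap.add_apply, LinearMap.smul_apply, smul_eq_mul,
        hT, hN, hTN, hNT]
  obtain ⟨guT, guN, gNu, gTu⟩ := gTu
  -- the defining linear map of S
  set sndm := LinearMap.snd ℝ (Fin Nf → ℝ) (Fin Nf → V) with hsndm
  set fstm := LinearMap.fst ℝ (Fin Nf → ℝ) (Fin Nf → V) with hfstm
  set L : ((Fin Nf → ℝ) × (Fin Nf → V)) →ₗ[ℝ] (Fin Nf → ℝ) :=
    LinearMap.pi (fun A =>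
      (g T).comp ((LinearMap.proj A).comp sndm)
      + α • (g N).comp ((LinearMap.proj A).comp sndm)
      - (∑ B, (g (c A B)).comp ((LinearMap.proj B).comp sndm))
      - ∑ B, dm A B • ((LinearMap.proj B).comp fstm)) with hLdef
  have hLapp : ∀ p A, L p A = g T (p.2 A) + α * g N (p.2 A)
      - (∑ B, g (c A B) (p.2 B)) - ∑ B, dm A B * p.1 B := by
    intro p A
    rw [hLdef]
    simp [LinearMap.pi_apply, LinearMap.sub_apply, LinearMap.add_apply, LinearMap.sum_apply,
      LinearMap.smul_apply, LinearMap.comp_apply, LinearMap.proj_apply, smul_eq_mul,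
      hsndm, hfstm]
  have hSker : S = LinearMap.ker L := by
    apply Submodule.ext
    intro p
    have hmem : p ∈ S ↔ ∀ A, g T (p.2 A) + α * g N (p.2 A)
        = (∑ B, g (c A B) (p.2 B)) + ∑ B, dm A B * p.1 B := by
      rw [← SetLike.mem_coe, hS]; rfl
    rw [hmem, LinearMap.mem_ker, funext_iff]
    apply forall_congr'
    intro A
    simp only [Pi.zero_apply]
    rw [hLapp]
    constructor
    · intro he; linarith
    · intro he; linarith
  -- the perturbation argument: L is surjective
  set wp : V := -T + α • N with hwp
  have gTwp : g T wp = 1 := by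
    rw [hwp]; simp [map_add, map_neg, map_smul, hT, hTN, smul_eq_mul]
  have gNwp : g N wp = α := by
    rw [hwp]; simp [map_add, map_neg, map_smul, hN, hNT, smul_eq_mul]
  have gwpwp : g wp wp = -1 + α ^ 2 := by
    rw [hwp]
    simp [map_add, map_neg, map_smul, LinearMap.add_apply, LinearMap.neg_apply,
      LinearMap.smul_apply, hT, hN, hTN, hNT, smul_eq_mul]
    ring
  set J : (Fin Nf → ℝ) →ₗ[ℝ] ((Fin Nf → ℝ) × (Fin Nf → V)) :=
    LinearMap.prod 0 (LinearMap.pi fun A => (LinearMap.proj A).smulRight wp) with hJdef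
  have hJapp : ∀ s, J s = (0, fun A => s A • wp) := by
    intro s
    rw [hJdef]
    simp [LinearMap.prod_apply, LinearMap.pi_apply, LinearMap.smulRight_apply]
    rfl
  have hLJ : ∀ (s : Fin Nf → ℝ) A, L (J s) A
      = (1 + α ^ 2) * s A - ∑ B, s B * g (c A B) wp := by
    intro s A
    rw [hJapp, hLapp]
    simp only [map_smul, smul_eq_mul, Pi.zero_apply, mul_zero, Finset.sum_const_zero,
      gTwp, gNwp]
    ring
  have hEinj : Function.Injective (L.comp J) := by
    rw [← LinearMap.ker_eq_bot, Submodule.eq_bot_iff]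
    intro s hs
    by_contra hs0
    have hrel : ∀ A, (∑ B, s B * g (c A B) wp) = (1 + α ^ 2) * s A := by
      intro A
      have h0 : L (J s) A = 0 := by
        rw [LinearMap.mem_ker] at hs
        rw [← LinearMap.comp_apply, hs]; rfl
      rw [hLJ] at h0
      linarith
    have hcs := hc (fun B => s B • wp)
    have e1 : (∑ A, ∑ B, h A B * (∑ C, g (c A C) ((fun B => s B • wp) C))
          * (∑ D, g (c B D) ((fun B => s B • wp) D)))
        = (1 + α ^ 2) ^ 2 * ∑ A, ∑ B, h A B * s A * s B := by
      rw [Finset.mul_sum]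
      refine Finset.sum_congr rfl fun A _ => ?_
      rw [Finset.mul_sum]
      refine Finset.sum_congr rfl fun B _ => ?_
      have eA : (∑ C, g (c A C) ((fun B => s B • wp) C)) = (1 + α ^ 2) * s A := by
        simp only [map_smul, smul_eq_mul]
        exact hrel A
      have eB : (∑ D, g (c B D) ((fun B => s B • wp) D)) = (1 + α ^ 2) * s B := by
        simp only [map_smul, smul_eq_mul]
        exact hrel B
      rw [eA, eB]; ring
    have e2 : (∑ A, ∑ B, h A B * (g ((fun B => s B • wp) A) ((fun B => s B • wp) B)
          + 2 * g T ((fun B => s B • wp) A) * g T ((fun B => s B • wp) B)))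
        = (1 + α ^ 2) * ∑ A, ∑ B, h A B * s A * s B := by
      rw [Finset.mul_sum]
      refine Finset.sum_congr rfl fun A _ => ?_
      rw [Finset.mul_sum]
      refine Finset.sum_congr rfl fun B _ => ?_
      simp only [map_smul, smul_eq_mul, LinearMap.smul_apply, gTwp, gwpwp]
      ring
    rw [e1, e2] at hcs
    have hQ := hQpos s hs0
    have hQ2 : 0 < (1 + α ^ 2) * ∑ A, ∑ B, h A B * s A * s B :=
      mul_pos (by positivity) hQ
    nlinarith [hcs, hQ2, hεα, hQ]
  have hLsurj : Function.Surjective L := by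
    have := (LinearMap.injective_iff_surjective).mp hEinj
    rw [LinearMap.coe_comp] at this
    exact Function.Surjective.of_comp this
  have hdimS : Module.finrank ℝ S = (d + 1) * Nf := by
    have hrk := LinearMap.finrank_range_add_finrank_ker L
    rw [LinearMap.range_eq_top.mpr hLsurj, finrank_top, hdimF, hdimtot] at hrk
    rw [hSker, mul_comm]
    omega
  -- auxiliary: g u x in terms of g T x and g N x
  have hguX : ∀ x : V, g u x = g T x + δ * g N x := by
    intro x
    rw [hu]
    simp [map_add, map_smul, LinearMap.add_apply, LinearMap.smul_apply, smul_eq_mul]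
  -- the positive subspace P
  set ep : V := T - N with hep
  have gTep : g T ep = -1 := by rw [hep]; simp [map_sub, hT, hTN]
  have gNep : g N ep = -1 := by rw [hep]; simp [map_sub, hN, hNT]
  have guep : g u ep = -(1 + δ) := by rw [hguX, gTep, gNep]; ring
  have gepep : g ep ep = 0 := by
    rw [hep]
    simp [map_sub, LinearMap.sub_apply, hT, hN, hTN, hNT]
  have hepne : ep ≠ 0 := by
    intro h0
    rw [h0] at gTep
    simp at gTep
  set JP : (Fin Nf → ℝ) →ₗ[ℝ] ((Fin Nf → ℝ) × (Fin Nf → V)) :=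
    LinearMap.prod 0 (LinearMap.pi fun A => (LinearMap.proj A).smulRight ep) with hJPdef
  have hJPapp : ∀ s, JP s = (0, fun A => s A • ep) := by
    intro s
    rw [hJPdef]
    simp [LinearMap.prod_apply, LinearMap.pi_apply, LinearMap.smulRight_apply]
    rfl
  have hJPinj : Function.Injective JP := by
    rw [← LinearMap.ker_eq_bot, Submodule.eq_bot_iff]
    intro s hs
    rw [LinearMap.mem_ker, hJPapp] at hs
    have h2 := congrArg Prod.snd hs
    funext A
    have h3 := congrFun h2 A
    simp only [Pi.zero_apply] at h3 ⊢
    rcases smul_eq_zero.mp h3 with h4 | h4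
    · exact h4
    · exact absurd h4 hepne
  set P := LinearMap.range JP with hPdef
  have hdimP : Module.finrank ℝ P = Nf := by
    rw [hPdef, LinearMap.finrank_range_of_inj hJPinj, hdimF]
  have hPpos : ∀ p ∈ P, p ≠ 0 → 0 < Bq p p := by
    rintro p hp hp0
    rw [hPdef, LinearMap.mem_range] at hp
    obtain ⟨s, rfl⟩ := hp
    have hs0 : s ≠ 0 := by
      intro h0
      exact hp0 (by rw [h0, map_zero])
    rw [hJPapp s]
    have t2 : ∀ A B : Fin Nf, h A B * (-(g N u) * g (s A • ep) (s B • ep)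
          + g N (s A • ep) * g u (s B • ep) + g u (s A • ep) * g N (s B • ep))
        = 2 * (1 + δ) * (h A B * s A * s B) := by
      intro A B
      simp only [map_smul, smul_eq_mul, LinearMap.smul_apply, gNep, guep, gepep, gNu]
      ring
    have hval : Bq (0, fun A => s A • ep) (0, fun A => s A • ep)
        = 2 * (1 + δ) * ∑ A : Fin Nf, ∑ B : Fin Nf, h A B * s A * s B := by
      rw [hBq]
      simp only [Pi.zero_apply, mul_zero, zero_mul, Finset.sum_const_zero, add_zero,
        neg_zero, zero_add]
      rw [Finset.sum_congr rfl fun A _ => Finset.sum_congr rfl fun B _ => t2 A B]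
      simp_rw [← Finset.mul_sum]
    rw [hval]
    have hq := hQpos s hs0
    have h2 := mul_pos (show (0:ℝ) < 2 * (1 + δ) by linarith) hq
    linarith
  -- the negative subspace Q
  set TpN : V := T + N with hTpNdef
  have gTpNep : g TpN ep = -2 := by
    rw [hTpNdef, hep]
    simp [map_add, map_sub, LinearMap.add_apply, hT, hN, hTN, hNT]
    ring
  set Lq : ((Fin Nf → ℝ) × (Fin Nf → V)) →ₗ[ℝ] (Fin Nf → ℝ) :=
    LinearMap.pi (fun A => (g TpN).comp ((LinearMap.proj A).comp sndm)) with hLqdef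
  have hLqapp : ∀ p A, Lq p A = g TpN (p.2 A) := by
    intro p A
    rw [hLqdef]
    simp [LinearMap.pi_apply, LinearMap.comp_apply, LinearMap.proj_apply, hsndm]
  set Q := LinearMap.ker Lq with hQdef
  have hLqsurj : Function.Surjective Lq := by
    intro t
    refine ⟨(0, fun A => (-(t A)/2) • ep), ?_⟩
    funext A
    rw [hLqapp]
    simp only [map_smul, smul_eq_mul, gTpNep]
    ring
  have hdimQ : Module.finrank ℝ Q = (d + 1) * Nf := by
    have hrk := LinearMap.finrank_range_add_finrank_ker Lq
    rw [LinearMap.range_eq_top.mpr hLqsurj, finrank_top, hdimF, hdimtot] at hrk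
    rw [hQdef, mul_comm]
    omega
  have hQneg : ∀ p ∈ Q, p ≠ 0 → Bq p p < 0 := by
    intro p hp hp0
    rw [hQdef, LinearMap.mem_ker] at hp
    have hcon : ∀ A, g T (p.2 A) + g N (p.2 A) = 0 := by
      intro A
      have h1 : Lq p A = 0 := by rw [hp]; rfl
      rw [hLqapp, hTpNdef] at h1
      simpa [map_add, LinearMap.add_apply] using h1
    set a : Fin Nf → ℝ := fun A => g N (p.2 A) with hadef
    set wv : Fin Nf → V := fun A => p.2 A - a A • TpN with hwvdef
    have gTTpN : g T TpN = -1 := by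
      rw [hTpNdef, map_add, hT, hTN]; ring
    have gNTpN : g N TpN = 1 := by
      rw [hTpNdef, map_add, hN, hNT]; ring
    have hgTw : ∀ A, g T (wv A) = 0 := by
      intro A
      show g T (p.2 A - a A • TpN) = 0
      rw [map_sub, map_smul, smul_eq_mul, gTTpN]
      have h1 := hcon A
      have h2 : a A = g N (p.2 A) := rfl
      rw [h2]
      linarith
    have hgNw : ∀ A, g N (wv A) = 0 := by
      intro A
      show g N (p.2 A - a A • TpN) = 0
      rw [map_sub, map_smul, smul_eq_mul, gNTpN]
      have h2 : a A = g N (p.2 A) := rfl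
      rw [h2]
      ring
    have hgTpNw : ∀ A, g TpN (wv A) = 0 := by
      intro A
      rw [hTpNdef, map_add, LinearMap.add_apply, hgTw A, hgNw A]
      ring
    have hTz : ∀ x : Fin Nf → ℝ, g T (∑ A, x A • wv A) = 0 := by
      intro x
      rw [map_sum]
      refine Finset.sum_eq_zero fun A _ => ?_
      rw [map_smul, smul_eq_mul, hgTw A, mul_zero]
    have hG := aux_hsum h hpos b g wv hg
      (fun x => (aux_timelike g b hsig T hT _ (hTz x)).1)
      (fun x hx => (aux_timelike g b hsig T hT _ (hTz x)).2 hx)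
    obtain ⟨hGnn, hGzero⟩ := hG
    have hvA : ∀ A, p.2 A = a A • TpN + wv A := by
      intro A
      show p.2 A = a A • TpN + (p.2 A - a A • TpN)
      abel
    have hgNv : ∀ A, g N (p.2 A) = a A := fun A => rfl
    have hgTv : ∀ A, g T (p.2 A) = -(a A) := by
      intro A
      have h1 := hcon A
      have h2 : a A = g N (p.2 A) := rfl
      rw [h2]
      linarith
    have hguv : ∀ A, g u (p.2 A) = (δ - 1) * a A := by
      intro A
      rw [hguX, hgTv A, hgNv A]
      ring
    have gTpNTpN : g TpN TpN = 0 := by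
      rw [hTpNdef, map_add, LinearMap.map_add₂, LinearMap.map_add₂, hT, hN, hTN, hNT]
      ring
    have hgvv : ∀ A B, g (p.2 A) (p.2 B) = g (wv A) (wv B) := by
      intro A B
      have h2 : g TpN (wv B) = 0 := hgTpNw B
      have h3 : g (wv A) TpN = 0 := by rw [hg]; exact hgTpNw A
      rw [hvA A, hvA B]
      simp only [map_add, map_smul, LinearMap.add_apply, LinearMap.smul_apply, smul_eq_mul]
      rw [gTpNTpN, h2, h3]
      ring
    have e2' : (∑ A : Fin Nf, ∑ B : Fin Nf, h A B * (-δ * g (p.2 A) (p.2 B)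
            + g N (p.2 A) * g u (p.2 B) + g u (p.2 A) * g N (p.2 B)))
        = 2 * (δ - 1) * (∑ A : Fin Nf, ∑ B : Fin Nf, h A B * a A * a B)
          - δ * (∑ A : Fin Nf, ∑ B : Fin Nf, h A B * g (wv A) (wv B)) := by
      have e : ∀ A B : Fin Nf, h A B * (-δ * g (p.2 A) (p.2 B)
            + g N (p.2 A) * g u (p.2 B) + g u (p.2 A) * g N (p.2 B))
          = 2 * (δ - 1) * (h A B * a A * a B) - δ * (h A B * g (wv A) (wv B)) := by
        intro A B
        rw [hgvv A B, hgNv A, hgNv B, hguv A, hguv B]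
        ring
      rw [Finset.sum_congr rfl fun A _ => Finset.sum_congr rfl fun B _ => e A B]
      rw [Finset.sum_congr rfl fun A _ => Finset.sum_sub_distrib _ _, Finset.sum_sub_distrib]
      simp_rw [← Finset.mul_sum]
    have hval : Bq p p = -(Λ * δ) * (∑ A : Fin Nf, ∑ B : Fin Nf, h A B * p.1 A * p.1 B)
        + (2 * (δ - 1) * (∑ A : Fin Nf, ∑ B : Fin Nf, h A B * a A * a B)
          - δ * (∑ A : Fin Nf, ∑ B : Fin Nf, h A B * g (wv A) (wv B))) := by
      rw [hBq, guN, gNu, e2']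
      ring
    rw [hval]
    have hQΦ := hQnn p.1
    have hQa := hQnn a
    by_cases hΦ : p.1 = 0
    · by_cases ha : a = 0
      · have hwne : ∃ A, wv A ≠ 0 := by
          by_contra hall
          push_neg at hall
          apply hp0
          have h2 : p.2 = 0 := by
            funext A
            have h3 := hall A
            have h4 : wv A = p.2 A - a A • TpN := rfl
            rw [h4, ha] at h3
            simpa using h3
          exact Prod.ext hΦ h2
        have hGpos : 0 < ∑ A : Fin Nf, ∑ B : Fin Nf, h A B * g (wv A) (wv B) := by
          rcases lt_or_eq_of_le hGnn with h1 | h1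
          · exact h1
          · obtain ⟨A, hA⟩ := hwne
            exact absurd (hGzero h1.symm A) hA
        have hz1 : (∑ A : Fin Nf, ∑ B : Fin Nf, h A B * p.1 A * p.1 B) = 0 := by
          rw [hΦ]; simp
        have hz2 : (∑ A : Fin Nf, ∑ B : Fin Nf, h A B * a A * a B) = 0 := by
          rw [ha]; simp
        rw [hz1, hz2]
        have h2 := mul_pos hδpos hGpos
        linarith only [h2]
      · have hQap := hQpos a ha
        have k1 : 0 ≤ Λ * δ * (∑ A : Fin Nf, ∑ B : Fin Nf, h A B * p.1 A * p.1 B) :=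
          mul_nonneg (mul_nonneg hΛ.le hδpos.le) hQΦ
        have k2 : 0 ≤ δ * (∑ A : Fin Nf, ∑ B : Fin Nf, h A B * g (wv A) (wv B)) :=
          mul_nonneg hδpos.le hGnn
        have k3 : 0 < (1 - δ) * (∑ A : Fin Nf, ∑ B : Fin Nf, h A B * a A * a B) :=
          mul_pos (by linarith only [hδlt]) hQap
        linarith only [k1, k2, k3]
    · have hQΦp := hQpos p.1 hΦ
      have k1 : 0 < Λ * δ * (∑ A : Fin Nf, ∑ B : Fin Nf, h A B * p.1 A * p.1 B) :=
        mul_pos (mul_pos hΛ hδpos) hQΦp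
      have k2 : 0 ≤ δ * (∑ A : Fin Nf, ∑ B : Fin Nf, h A B * g (wv A) (wv B)) :=
        mul_nonneg hδpos.le hGnn
      have k3 : 0 ≤ (1 - δ) * (∑ A : Fin Nf, ∑ B : Fin Nf, h A B * a A * a B) :=
        mul_nonneg (by linarith only [hδlt]) hQa
      linarith only [k1, k2, k3]
  -- conclusion
  refine ⟨hdimS, ⟨P, Q, hdimP, hdimQ, hPpos, hQneg⟩, ?_⟩
  intro S' hSS' hBnp
  have hdisj : S' ⊓ P = ⊥ := by
    rw [Submodule.eq_bot_iff]
    intro x hx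
    by_contra hx0
    exact absurd (hBnp x hx.1) (not_le.mpr (hPpos x hx.2 hx0))
  have hsum := Submodule.finrank_sup_add_finrank_inf_eq S' P
  rw [hdisj, finrank_bot, add_zero] at hsum
  have hle : Module.finrank ℝ ↥(S' ⊔ P) ≤ Nf + Nf * (d + 1) := by
    rw [← hdimtot]
    exact Submodule.finrank_le _
  have hS'le : Module.finrank ℝ S' ≤ (d + 1) * Nf := by
    rw [mul_comm]
    omega
  exact (Submodule.eq_of_le_of_finrank_le hSS' (by rw [hdimS]; exact hS'le)).symm
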